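/- If in a spatial congestion game all resources are identical to each player, i.e., g_r^i(n) = g^i(n) for all resources r and all n, with each g^i non-increasing, then the function φ(σ) = (1/2) Σ_i n^i(σ), counting the number of edges whose endpoints choose the same resource, strictly decreases with every strict improvement step; hence the game has the finite improvement property and a pure strategy Nash equilibrium. -/

import Mathlib

open scoped Classical

/-- Number of neighbors of `i` in `G` choosing resource `r` under profile `σ`. -/
noncomputable def cnt {ι R : Type*} [Fintype ι]
    (G : SimpleGraph ι) (σ : ι → R) (i : ι) (r : R) : ℕ :=
  (Finset.univ.filter (fun j => G.Adj i j ∧ σ j = r)).card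

/-- When all resources are identical to each player, player `i`'s payoff is
`g i (n^i(σ) + 1)` where `n^i(σ)` is the number of neighbors sharing `i`'s resource. -/
noncomputable def idPayoff {ι R : Type*} [Fintype ι]
    (G : SimpleGraph ι) (g : ι → ℕ → ℤ) (σ : ι → R) (i : ι) : ℤ :=
  g i (cnt G σ i (σ i) + 1)

/-- A strict improvement step. -/
def Improves {ι R : Type*} [Fintype ι]
    (G : SimpleGraph ι) (g : ι → ℕ → ℤ) (σ σ' : ι → R) : Prop :=
  ∃ i : ι, (∀ j, j ≠ i → σ' j = σ j) ∧ idPayoff G g σ i < idPayoff G g σ' i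

/-- `φ(σ) = (1/2) Σ_i n^i(σ)`: the number of edges whose endpoints choose the same resource. -/
noncomputable def sameEdges {ι R : Type*} [Fintype ι]
    (G : SimpleGraph ι) (σ : ι → R) : ℕ :=
  (Finset.univ.filter (fun p : ι × ι => G.Adj p.1 p.2 ∧ σ p.1 = σ p.2)).card / 2

section aux
variable {ι R : Type*} [Fintype ι]

noncomputable def Epairs (G : SimpleGraph ι) (σ : ι → R) : Finset (ι × ι) :=
  Finset.univ.filter (fun p : ι × ι => G.Adj p.1 p.2 ∧ σ p.1 = σ p.2)

def monoGraph (G : SimpleGraph ι) (σ : ι → R) : SimpleGraph ι where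
  Adj a b := G.Adj a b ∧ σ a = σ b
  symm := ⟨fun a b h => ⟨h.1.symm, h.2.symm⟩⟩
  loopless := ⟨fun a h => G.loopless.irrefl a h.1⟩

lemma even_Epairs (G : SimpleGraph ι) (σ : ι → R) : 2 ∣ (Epairs G σ).card := by
  have h1 : (Epairs G σ).card = Fintype.card {p : ι × ι // (monoGraph G σ).Adj p.1 p.2} := by
    rw [Fintype.card_subtype]
    congr 1
    ext p
    simp only [Finset.mem_filter]
    simp [Epairs, monoGraph]
  have h2 : Fintype.card {p : ι × ι // (monoGraph G σ).Adj p.1 p.2}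
      = Fintype.card (monoGraph G σ).Dart := by
    refine Fintype.card_congr ?_
    exact ⟨fun p => ⟨p.1, p.2⟩, fun d => ⟨d.toProd, d.adj⟩, fun p => rfl, fun d => rfl⟩
  rw [h1, h2, SimpleGraph.dart_card_eq_twice_card_edges]
  exact Dvd.intro _ rfl

lemma Epairs_card (G : SimpleGraph ι) (σ : ι → R) (i : ι)
    (c : Finset (ι × ι)) (hc : c = (Epairs G σ).filter (fun p => p.1 ≠ i ∧ p.2 ≠ i)) :
    (Epairs G σ).card = cnt G σ i (σ i) + cnt G σ i (σ i) + c.card := by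
  classical
  have h1 := Finset.card_filter_add_card_filter_not (s := Epairs G σ)
    (p := fun p => p.1 = i)
  have h2 := Finset.card_filter_add_card_filter_not
    (s := (Epairs G σ).filter (fun p => ¬ p.1 = i)) (p := fun p => p.2 = i)
  have hA : ((Epairs G σ).filter (fun p => p.1 = i)).card = cnt G σ i (σ i) := by
    refine Finset.card_bij' (fun p _ => p.2) (fun j _ => (i, j)) ?_ ?_ ?_ ?_
    · intro p hp
      simp only [Epairs, Finset.mem_filter, Finset.mem_univ, true_and] at hp ⊢
      obtain ⟨⟨hadj, hcol⟩, h1⟩ := hp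
      subst h1
      exact ⟨hadj, hcol.symm⟩
    · intro j hj
      simp only [Epairs, Finset.mem_filter, Finset.mem_univ, true_and] at hj ⊢
      exact ⟨⟨hj.1, hj.2.symm⟩, trivial⟩
    · intro p hp
      simp only [Finset.mem_filter] at hp
      exact Prod.ext hp.2.symm rfl
    · intro j hj
      rfl
  have hB : (((Epairs G σ).filter (fun p => ¬ p.1 = i)).filter (fun p => p.2 = i)).card
      = cnt G σ i (σ i) := by
    refine Finset.card_bij' (fun p _ => p.1) (fun j _ => (j, i)) ?_ ?_ ?_ ?_
    · intro p hp
      simp only [Epairs, Finset.mem_filter, Finset.mem_univ, true_and] at hp ⊢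
      obtain ⟨⟨⟨hadj, hcol⟩, hne⟩, h2'⟩ := hp
      rw [h2'] at hadj hcol
      exact ⟨hadj.symm, hcol⟩
    · intro j hj
      simp only [Epairs, Finset.mem_filter, Finset.mem_univ, true_and] at hj ⊢
      exact ⟨⟨⟨hj.1.symm, hj.2⟩, hj.1.ne'⟩, trivial⟩
    · intro p hp
      simp only [Finset.mem_filter] at hp
      exact Prod.ext rfl hp.2.symm
    · intro j hj
      rfl
  have hC : ((Epairs G σ).filter (fun p => ¬ p.1 = i)).filter (fun p => ¬ p.2 = i) = c := by
    rw [hc, Finset.filter_filter]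
  rw [hC] at h2
  omega

end aux

section main
variable {ι R : Type*} [Fintype ι]

lemma sameEdges_eq_div (G : SimpleGraph ι) (σ : ι → R) :
    sameEdges G σ = (Epairs G σ).card / 2 := rfl

lemma cnt_shift (G : SimpleGraph ι) (σ σ' : ι → R) (i : ι)
    (h : ∀ j, j ≠ i → σ' j = σ j) (r : R) : cnt G σ' i r = cnt G σ i r := by
  unfold cnt
  congr 1
  ext j
  simp only [Finset.mem_filter, Finset.mem_univ, true_and]
  constructor
  · rintro ⟨ha, hc⟩; exact ⟨ha, by rwa [h j ha.ne'] at hc⟩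
  · rintro ⟨ha, hc⟩; exact ⟨ha, by rwa [h j ha.ne']⟩

lemma Epairs_lt (G : SimpleGraph ι) (g : ι → ℕ → ℤ) (hg : ∀ i, Antitone (g i))
    (σ σ' : ι → R) (h : Improves G g σ σ') :
    (Epairs G σ').card < (Epairs G σ).card := by
  obtain ⟨i, hoff, hpay⟩ := h
  -- strict decrease of own count
  have hcnt : cnt G σ' i (σ' i) < cnt G σ i (σ i) := by
    by_contra hle
    push_neg at hle
    have := hg i (Nat.add_le_add_right hle 1)
    unfold idPayoff at hpay
    omega
  -- the off-i pairs coincide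
  have hcc : (Epairs G σ').filter (fun p => p.1 ≠ i ∧ p.2 ≠ i)
      = (Epairs G σ).filter (fun p => p.1 ≠ i ∧ p.2 ≠ i) := by
    ext p
    simp only [Epairs, Finset.mem_filter, Finset.mem_univ, true_and, ne_eq]
    constructor
    · rintro ⟨⟨ha, hcol⟩, h1, h2⟩
      exact ⟨⟨ha, by rwa [hoff _ h1, hoff _ h2] at hcol⟩, h1, h2⟩
    · rintro ⟨⟨ha, hcol⟩, h1, h2⟩
      exact ⟨⟨ha, by rw [hoff _ h1, hoff _ h2]; exact hcol⟩, h1, h2⟩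
  have e1 := Epairs_card G σ i ((Epairs G σ).filter (fun p => p.1 ≠ i ∧ p.2 ≠ i)) rfl
  have e2 := Epairs_card G σ' i ((Epairs G σ).filter (fun p => p.1 ≠ i ∧ p.2 ≠ i)) hcc.symm
  omega

lemma sameEdges_lt (G : SimpleGraph ι) (g : ι → ℕ → ℤ) (hg : ∀ i, Antitone (g i))
    (σ σ' : ι → R) (h : Improves G g σ σ') :
    sameEdges G σ' < sameEdges G σ := by
  rw [sameEdges_eq_div, sameEdges_eq_div]
  exact Nat.div_lt_div_of_lt_of_dvd (even_Epairs G σ) (Epairs_lt G g hg σ σ' h)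

end main

/-- If all resources are identical to each player (`g_r^i = g^i` for all `r`), with each `g^i`
non-increasing, then the number of monochromatic edges strictly decreases at every strict
improvement step; hence the game has the finite improvement property and a pure NE. -/
theorem fip_identical_resources {ι R : Type*} [Fintype ι] [Fintype R] [Nonempty R]
    (G : SimpleGraph ι) (g : ι → ℕ → ℤ) (hg : ∀ i, Antitone (g i)) :
    (∀ σ σ' : ι → R, Improves G g σ σ' → sameEdges G σ' < sameEdges G σ) ∧
    (¬ ∃ f : ℕ → (ι → R), ∀ n, Improves G g (f n) (f (n + 1))) ∧
    (∃ σ : ι → R, ∀ (i : ι) (r : R),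
        g i (cnt G σ i r + 1) ≤ g i (cnt G σ i (σ i) + 1)) := by
  have key : ∀ σ σ' : ι → R, Improves G g σ σ' → sameEdges G σ' < sameEdges G σ :=
    fun σ σ' h => sameEdges_lt G g hg σ σ' h
  refine ⟨key, ?_, ?_⟩
  · rintro ⟨f, hf⟩
    have hmono : ∀ n, sameEdges G (f n) + n ≤ sameEdges G (f 0) := by
      intro n
      induction n with
      | zero => simp
      | succ n ih =>
        have := key (f n) (f (n+1)) (hf n)
        omega
    have := hmono (sameEdges G (f 0) + 1)
    omega
  · obtain ⟨σ, -, hmin⟩ := Finset.exists_min_image (Finset.univ : Finset (ι → R))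
      (sameEdges G) ⟨Classical.arbitrary _, Finset.mem_univ _⟩
    refine ⟨σ, fun i r => ?_⟩
    by_contra hlt
    push_neg at hlt
    set σ' := Function.update σ i r with hσ'
    have hoff : ∀ j, j ≠ i → σ' j = σ j := fun j hj => Function.update_of_ne hj _ _
    have himp : Improves G g σ σ' := by
      refine ⟨i, hoff, ?_⟩
      unfold idPayoff
      have h1 : σ' i = r := Function.update_self _ _ _
      rw [h1, cnt_shift G σ σ' i hoff r]
      exact hlt
    have := key σ σ' himp
    have := hmin σ' (Finset.mem_univ _)
    omega
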